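/- Let F be a finite field, C1, C2 ⊆ F^n linear codes, and x ∈ C1 ⊞ C2. Let X ⊆ F^n be the span of the columns of x and Y ⊆ F^n the span of the rows of x. Then rank(x) ≤ dim(X ∩ C1) + dim(Y ∩ C2). -/

import Mathlib

open Matrix Finset

namespace RTC

variable {F : Type*} [Field F] [Fintype F]

/-- All columns of the matrix `a` lie in the code `C`. -/
def colsIn {n1 n2 : ℕ} (C : Submodule F (Fin n1 → F)) (a : Matrix (Fin n1) (Fin n2) F) : Prop :=
  ∀ j : Fin n2, (fun i => a i j) ∈ C

/-- All rows of the matrix `a` lie in the code `C`. -/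
def rowsIn {n1 n2 : ℕ} (C : Submodule F (Fin n2 → F)) (a : Matrix (Fin n1) (Fin n2) F) : Prop :=
  ∀ i : Fin n1, (fun j => a i j) ∈ C

/-- Hamming weight of a matrix: the number of nonzero entries. -/
noncomputable def mwt {n1 n2 : ℕ} (x : Matrix (Fin n1) (Fin n2) F) : ℕ :=
  Nat.card {p : Fin n1 × Fin n2 // x p.1 p.2 ≠ 0}

/-- The number of nonzero columns of a matrix (`|x|_1`). -/
noncomputable def colWt {n1 n2 : ℕ} (x : Matrix (Fin n1) (Fin n2) F) : ℕ :=
  Nat.card {j : Fin n2 // (fun i => x i j) ≠ 0}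

/-- The number of nonzero rows of a matrix (`|x|_2`). -/
noncomputable def rowWt {n1 n2 : ℕ} (x : Matrix (Fin n1) (Fin n2) F) : ℕ :=
  Nat.card {i : Fin n1 // (fun j => x i j) ≠ 0}

/-- Hamming weight of a vector. -/
noncomputable def vwt {n : ℕ} (v : Fin n → F) : ℕ := Nat.card {i : Fin n // v i ≠ 0}

/-- Membership in `C1 ⊞ C2`: `c = a1 + a2` with all columns of `a1` in `C1`
and all rows of `a2` in `C2`. -/
def memBoxPlus {n1 n2 : ℕ} (C1 : Submodule F (Fin n1 → F)) (C2 : Submodule F (Fin n2 → F))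
    (c : Matrix (Fin n1) (Fin n2) F) : Prop :=
  ∃ a1 a2 : Matrix (Fin n1) (Fin n2) F, colsIn C1 a1 ∧ rowsIn C2 a2 ∧ c = a1 + a2

/-- The pair `(C1, C2)` is `ρ`-product-expanding: every `c ∈ C1 ⊞ C2` can be written as
`c = a1 + a2` (columns of `a1` in `C1`, rows of `a2` in `C2`) with
`ρ·(n1·|a1|_1 + n2·|a2|_2) ≤ |c|`. -/
def ProductExpanding {n1 n2 : ℕ} (ρ : ℝ) (C1 : Submodule F (Fin n1 → F))
    (C2 : Submodule F (Fin n2 → F)) : Prop :=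
  ∀ c : Matrix (Fin n1) (Fin n2) F, memBoxPlus C1 C2 c →
    ∃ a1 a2 : Matrix (Fin n1) (Fin n2) F, colsIn C1 a1 ∧ rowsIn C2 a2 ∧ c = a1 + a2 ∧
      ρ * ((n1 : ℝ) * (colWt a1 : ℝ) + (n2 : ℝ) * (rowWt a2 : ℝ)) ≤ (mwt c : ℝ)

/-- `C1 ⊗ F^{n2}` viewed as a submodule of matrices: all columns lie in `C`. -/
def colSp {n1 : ℕ} (n2 : ℕ) (C : Submodule F (Fin n1 → F)) :
    Submodule F (Matrix (Fin n1) (Fin n2) F) where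
  carrier := {a | ∀ j : Fin n2, (fun i => a i j) ∈ C}
  add_mem' := by
    intro a b ha hb j
    exact C.add_mem (ha j) (hb j)
  zero_mem' := by
    intro j
    exact C.zero_mem
  smul_mem' := by
    intro r a ha j
    exact C.smul_mem r (ha j)

/-- `F^{n1} ⊗ C` viewed as a submodule of matrices: all rows lie in `C`. -/
def rowSp (n1 : ℕ) {n2 : ℕ} (C : Submodule F (Fin n2 → F)) :
    Submodule F (Matrix (Fin n1) (Fin n2) F) where
  carrier := {a | ∀ i : Fin n1, (fun j => a i j) ∈ C}
  add_mem' := by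
    intro a b ha hb i
    exact C.add_mem (ha i) (hb i)
  zero_mem' := by
    intro i
    exact C.zero_mem
  smul_mem' := by
    intro r a ha i
    exact C.smul_mem r (ha i)

/-- The tensor product code `C1 ⊗ C2`: all columns in `C1` and all rows in `C2`. -/
def tens {n1 n2 : ℕ} (C1 : Submodule F (Fin n1 → F)) (C2 : Submodule F (Fin n2 → F)) :
    Submodule F (Matrix (Fin n1) (Fin n2) F) :=
  colSp n2 C1 ⊓ rowSp n1 C2

/-- The dual code `C^⊥`. -/
def dualCode {n : ℕ} (C : Submodule F (Fin n → F)) : Submodule F (Fin n → F) where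
  carrier := {y | ∀ c ∈ C, ∑ i, y i * c i = 0}
  add_mem' := by
    intro a b ha hb c hc
    have h2 : ∑ i, (a + b) i * c i = (∑ i, a i * c i) + ∑ i, b i * c i := by
      rw [← Finset.sum_add_distrib]; congr 1; funext i
      show (a i + b i) * c i = _; ring
    rw [h2, ha c hc, hb c hc, add_zero]
  zero_mem' := by
    intro c hc
    simp
  smul_mem' := by
    intro r a ha c hc
    have h2 : ∑ i, (r • a) i * c i = r * ∑ i, a i * c i := by
      rw [Finset.mul_sum]; congr 1; funext i
      show (r * a i) * c i = _; ring
    rw [h2, ha c hc, mul_zero]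

/-- Normalized distance `δ(x, S) = min_{s ∈ S} |x − s| / n²` of a matrix to a set of matrices. -/
noncomputable def ndelta {n : ℕ} (x : Matrix (Fin n) (Fin n) F)
    (S : Set (Matrix (Fin n) (Fin n) F)) : ℝ :=
  sInf ((fun s => (mwt (x - s) : ℝ) / ((n : ℝ) ^ 2)) '' S)

/-- The code `C1 ⊗ C2` is `ρ`-robustly testable. -/
def RobustlyTestable {n : ℕ} (ρ : ℝ) (C1 C2 : Submodule F (Fin n → F)) : Prop :=
  ∀ x : Matrix (Fin n) (Fin n) F,
    ρ * ndelta x (tens C1 C2 : Set (Matrix (Fin n) (Fin n) F)) ≤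
      (ndelta x (colSp n C1 : Set (Matrix (Fin n) (Fin n) F)) +
       ndelta x (rowSp n C2 : Set (Matrix (Fin n) (Fin n) F))) / 2

/-- The code `C1 ⊗ C2` is `ρ`-agreement testable. -/
def AgreementTestable {n : ℕ} (ρ : ℝ) (C1 C2 : Submodule F (Fin n → F)) : Prop :=
  ∀ c1 c2 : Matrix (Fin n) (Fin n) F, colsIn C1 c1 → rowsIn C2 c2 →
    ∃ c : Matrix (Fin n) (Fin n) F, colsIn C1 c ∧ rowsIn C2 c ∧
      ρ * ((colWt (c1 - c) : ℝ) + (rowWt (c2 - c) : ℝ)) ≤ (mwt (c1 - c2) : ℝ) / (n : ℝ)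

/-- The `q`-ary entropy function. -/
noncomputable def Hq (q : ℕ) (x : ℝ) : ℝ :=
  x * Real.logb q (q - 1) - x * Real.logb q x - (1 - x) * Real.logb q (1 - x)

/-- A subspace is `α`-sparse if it is spanned by vectors of Hamming weight at most `α·n`. -/
def Sparse {n : ℕ} (α : ℝ) (V : Submodule F (Fin n → F)) : Prop :=
  ∃ S : Set (Fin n → F), (∀ v ∈ S, (vwt v : ℝ) ≤ α * n) ∧ Submodule.span F S = V

/-- The Gaussian (`q`-ary) binomial coefficient, as a real number. -/
noncomputable def qBinom (q n k : ℕ) : ℝ :=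
  ∏ i ∈ Finset.range k, ((q : ℝ) ^ (n - i) - 1) / ((q : ℝ) ^ (k - i) - 1)

/-- Minimal Hamming distance from a vector to a code. -/
noncomputable def vdist {n : ℕ} (v : Fin n → F) (C : Submodule F (Fin n → F)) : ℕ :=
  sInf {d : ℕ | ∃ c ∈ C, vwt (v - c) = d}

/-- A codeword `x ∈ C1 ⊞ C2` is `Δ`-minimal. -/
def DeltaMinimal {n : ℕ} (C1 C2 : Submodule F (Fin n → F)) (Δ : ℝ)
    (x : Matrix (Fin n) (Fin n) F) : Prop :=
  (∀ i : Fin n, (vwt (fun j => x i j) : ℝ) ≤ (vdist (fun j => x i j) C2 : ℝ) + Δ) ∧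
  (∀ j : Fin n, (vwt (fun i => x i j) : ℝ) ≤ (vdist (fun i => x i j) C1 : ℝ) + Δ)

/-- Hamming weight of the submatrix of `x` with rows in `A` and columns in `B`. -/
noncomputable def subWt {n : ℕ} (x : Matrix (Fin n) (Fin n) F) (A B : Finset (Fin n)) : ℕ :=
  Nat.card {p : Fin n × Fin n // p.1 ∈ A ∧ p.2 ∈ B ∧ x p.1 p.2 ≠ 0}

/-- The pair `(C1, C2)` is `(s, m, β)`-product-expanding. -/
def SMBExpanding {n : ℕ} (s m β : ℝ) (C1 C2 : Submodule F (Fin n → F)) : Prop :=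
  ∀ x : Matrix (Fin n) (Fin n) F, memBoxPlus C1 C2 x → x ≠ 0 →
    DeltaMinimal C1 C2 (β * n) x →
    ∀ A B : Finset (Fin n), (n : ℝ) - m ≤ (A.card : ℝ) → (n : ℝ) - m ≤ (B.card : ℝ) →
      s ≤ (subWt x A B : ℝ)

/-- The function `c` restricted to every line parallel to axis `i` lies in `C i`
(membership in `C^{(i)}`). -/
def axisIn {ι : Type*} [DecidableEq ι] {n : ι → ℕ} (C : ∀ i, Submodule F (Fin (n i) → F))
    (i : ι) (a : (∀ j, Fin (n j)) → F) : Prop :=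
  ∀ y : ∀ j, Fin (n j), (fun s => a (Function.update y i s)) ∈ C i

/-- The number of grid points lying on a line parallel to axis `i` on which `a` is not
identically zero.  Since every such line contains exactly `n i` points, this equals
`n i · |a|_i` where `|a|_i` is the number of nonzero lines parallel to axis `i`. -/
noncomputable def lineCnt {ι : Type*} [DecidableEq ι] {n : ι → ℕ} (i : ι)
    (a : (∀ j, Fin (n j)) → F) : ℕ :=
  Nat.card {y : ∀ j, Fin (n j) // (fun s : Fin (n i) => a (Function.update y i s)) ≠ 0}

/-- Hamming weight of an element of `F^{n_1 × … × n_m}`. -/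
noncomputable def gwt {ι : Type*} {n : ι → ℕ} (a : (∀ j, Fin (n j)) → F) : ℕ :=
  Nat.card {y : ∀ j, Fin (n j) // a y ≠ 0}

/-- The collection `C` is `ρ`-product-expanding: every `c ∈ C_1 ⊞ … ⊞ C_m` can be written as
`c = Σ_i a_i` with `a_i ∈ C^{(i)}` and `ρ · Σ_i n_i·|a_i|_i ≤ |c|`
(note `lineCnt i (a i) = n_i · |a_i|_i`). -/
def MProdExpanding {ι : Type*} [Fintype ι] [DecidableEq ι] {n : ι → ℕ} (ρ : ℝ)
    (C : ∀ i, Submodule F (Fin (n i) → F)) : Prop :=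
  ∀ c : (∀ j, Fin (n j)) → F,
    (∃ a : ι → ((∀ j, Fin (n j)) → F), (∀ i, axisIn C i (a i)) ∧ c = ∑ i, a i) →
    ∃ a : ι → ((∀ j, Fin (n j)) → F), (∀ i, axisIn C i (a i)) ∧ c = ∑ i, a i ∧
      ρ * (∑ i, (lineCnt i (a i) : ℝ)) ≤ (gwt c : ℝ)

end RTC

section Aux

variable {F : Type} [Field F] {n : ℕ}

/-- The dot-product bilinear form on `Fin n → F`. -/
noncomputable def dotB (F : Type) [Field F] (n : ℕ) : LinearMap.BilinForm F (Fin n → F) :=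
  LinearMap.mk₂ F (fun u v => ∑ i, u i * v i)
    (fun u u' v => by simp [add_mul, Finset.sum_add_distrib])
    (fun c u v => by simp [Finset.mul_sum, mul_assoc])
    (fun u v v' => by simp [mul_add, Finset.sum_add_distrib])
    (fun c u v => by simp [Finset.mul_sum]; exact Finset.sum_congr rfl fun i _ => by ring)

lemma dotB_apply (u v : Fin n → F) : dotB F n u v = ∑ i, u i * v i := rfl

lemma dotB_refl : (dotB F n).IsRefl := fun u v h => by
  simp only [dotB_apply] at h ⊢
  rw [← h]
  exact Finset.sum_congr rfl fun i _ => mul_comm _ _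

lemma dotB_nondeg : (dotB F n).Nondegenerate := by
  refine (LinearMap.IsRefl.nondegenerate_iff_separatingLeft (B := dotB F n) fun u v h => dotB_refl u v h).mpr ?_
  intro u h
  funext i
  have := h (Pi.single i 1)
  simpa [dotB_apply, Pi.single_apply, mul_ite, Finset.sum_ite_eq'] using this

lemma mem_dualCode {C : Submodule F (Fin n → F)} {u : Fin n → F} :
    u ∈ RTC.dualCode C ↔ ∀ c ∈ C, ∑ i, u i * c i = 0 := Iff.rfl

lemma dualCode_eq_orthogonal (C : Submodule F (Fin n → F)) :
    RTC.dualCode C = (dotB F n).orthogonal C := by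
  ext u
  rw [mem_dualCode, LinearMap.BilinForm.mem_orthogonal_iff]
  constructor
  · intro h c hc
    have := h c hc
    rw [dotB_apply, ← this]
    exact Finset.sum_congr rfl fun i _ => mul_comm _ _
  · intro h c hc
    have := h c hc
    rw [dotB_apply] at this
    rw [← this]
    exact Finset.sum_congr rfl fun i _ => mul_comm _ _

lemma finrank_dualCode (C : Submodule F (Fin n → F)) :
    Module.finrank F (RTC.dualCode C) + Module.finrank F C = n := by
  rw [dualCode_eq_orthogonal]
  have h := LinearMap.BilinForm.finrank_add_finrank_orthogonal (B := dotB F n) dotB_refl C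
  rw [LinearMap.BilinForm.orthogonal_top_eq_bot dotB_nondeg, inf_bot_eq, finrank_bot F (Fin n → F),
    add_zero, Module.finrank_fin_fun] at h
  omega

lemma dualCode_inf (C C' : Submodule F (Fin n → F)) :
    RTC.dualCode C ⊓ RTC.dualCode C' = RTC.dualCode (C ⊔ C') := by
  ext u
  simp only [Submodule.mem_inf, mem_dualCode]
  constructor
  · rintro ⟨h1, h2⟩ c hc
    obtain ⟨c1, hc1, c2, hc2, rfl⟩ := Submodule.mem_sup.mp hc
    simp only [Pi.add_apply, mul_add, Finset.sum_add_distrib, h1 c1 hc1, h2 c2 hc2, add_zero]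
  · intro h
    exact ⟨fun c hc => h c (Submodule.mem_sup_left hc),
      fun c hc => h c (Submodule.mem_sup_right hc)⟩

end Aux

/-- for `x ∈ C1 ⊞ C2`, with `X` the span of the columns of `x` and `Y` the span
of its rows, `rank(x) ≤ dim(X ∩ C1) + dim(Y ∩ C2)`. -/
theorem statement10 (F : Type) [Field F] [Fintype F] {n : ℕ}
    (C1 C2 : Submodule F (Fin n → F))
    (x : Matrix (Fin n) (Fin n) F) (hx : RTC.memBoxPlus C1 C2 x) :
    x.rank ≤
      Module.finrank F ↥(Submodule.span F (Set.range fun j : Fin n => fun i => x i j) ⊓ C1) +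
      Module.finrank F ↥(Submodule.span F (Set.range fun i : Fin n => fun j => x i j) ⊓ C2) := by
  obtain ⟨a1, a2, ha1, ha2, hxeq⟩ := hx
  set X := Submodule.span F (Set.range fun j : Fin n => fun i => x i j) with hXdef
  set Y := Submodule.span F (Set.range fun i : Fin n => fun j => x i j) with hYdef
  set D := RTC.dualCode C1 with hDdef
  set φ := x.vecMulLinear with hφdef
  -- column span
  have hX : LinearMap.range x.mulVecLin = X := by
    rw [Matrix.range_mulVecLin, hXdef]
    rfl
  have hrank : x.rank = Module.finrank F X := by rw [Matrix.rank, hX]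
  -- row span
  have hY : LinearMap.range φ = Y := by
    rw [hφdef, range_vecMulLinear, hYdef]
    rfl
  -- kernel of φ
  have hker : LinearMap.ker φ = RTC.dualCode X := by
    ext u
    rw [LinearMap.mem_ker, mem_dualCode]
    constructor
    · intro h c hc
      have hle : X ≤ LinearMap.ker (dotB F n u) := by
        rw [hXdef, Submodule.span_le]
        rintro _ ⟨j, rfl⟩
        rw [SetLike.mem_coe, LinearMap.mem_ker, dotB_apply]
        have := congrFun h j
        simpa [hφdef, Matrix.vecMul, dotProduct] using this
      have := hle hc
      rwa [LinearMap.mem_ker, dotB_apply] at this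
    · intro h
      funext j
      have hcol : (fun i => x i j) ∈ X :=
        Submodule.subset_span ⟨j, rfl⟩
      have := h _ hcol
      simpa [hφdef, Matrix.vecMul, dotProduct] using this
  -- rank-nullity for φ restricted to D
  have hrn : Module.finrank F D =
      Module.finrank F (D.map φ) + Module.finrank F (D ⊓ LinearMap.ker φ : Submodule F _) := by
    have h0 := LinearMap.finrank_range_add_finrank_ker (φ.domRestrict D)
    rw [LinearMap.range_domRestrict, LinearMap.ker_domRestrict] at h0
    have h2 : Module.finrank F (Submodule.comap D.subtype (LinearMap.ker φ)) =
        Module.finrank F (D ⊓ LinearMap.ker φ : Submodule F _) := by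
      rw [← Submodule.map_comap_subtype, Submodule.finrank_map_subtype_eq]
    rw [h2] at h0
    omega
  -- the image lands in Y ⊓ C2
  have hmap : D.map φ ≤ Y ⊓ C2 := by
    rintro _ ⟨u, hu, rfl⟩
    refine Submodule.mem_inf.mpr ⟨?_, ?_⟩
    · rw [← hY]; exact LinearMap.mem_range_self _ _
    · have h1 : x.vecMul u = a1.vecMul u + a2.vecMul u := by
        rw [hxeq, Matrix.vecMul_add]
      have h2 : a1.vecMul u = 0 := by
        funext j
        have := hu _ (ha1 j)
        simpa [Matrix.vecMul, dotProduct] using this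
      have h3 : a2.vecMul u ∈ C2 := by
        have : a2.vecMul u = ∑ i, u i • (fun j => a2 i j) := by
          funext j
          simp [Matrix.vecMul, dotProduct, Finset.sum_apply]
        rw [this]
        exact Submodule.sum_mem _ fun i _ => C2.smul_mem _ (ha2 i)
      have h4 : φ u = x.vecMul u := rfl
      rw [h4, h1, h2, zero_add]
      exact h3
  -- dimension bookkeeping
  have hA : Module.finrank F D + Module.finrank F C1 = n := finrank_dualCode C1
  have hB : Module.finrank F ↥(RTC.dualCode (C1 ⊔ X)) + Module.finrank F ↥(C1 ⊔ X) = n :=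
    finrank_dualCode _
  have hE : Module.finrank F ↥(C1 ⊔ X : Submodule F (Fin n → F)) +
      Module.finrank F ↥(C1 ⊓ X : Submodule F (Fin n → F)) =
      Module.finrank F C1 + Module.finrank F X :=
    Submodule.finrank_sup_add_finrank_inf_eq C1 X
  have hle : Module.finrank F (D.map φ) ≤ Module.finrank F (Y ⊓ C2 : Submodule F _) :=
    Submodule.finrank_mono hmap
  have hinf : D ⊓ LinearMap.ker φ = RTC.dualCode (C1 ⊔ X) := by
    rw [hDdef, hker, dualCode_inf]
  rw [hinf] at hrn
  have hcomm : (C1 ⊓ X : Submodule F (Fin n → F)) = X ⊓ C1 := inf_comm C1 X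
  rw [hcomm] at hE
  rw [hrank]
  omega
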